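/- Suppose the player's predictions b_t satisfy: for every (p,λ) ∈ Δ_{L+1} × [0, λ_max] with λ_max ≥ 1, (1/T)Σ_t l(b_t, λ, y_t) − (1/T)Σ_t l(⟨p, S_t(x_t)⟩, λ_t, y_t) ≤ R, where l(b, λ, y) = f(b,y) + λ(g(b,y) − γ). If there exists an index k (the artificial expert) such that g(S_t^k(x_t), y_t) ≤ γ for all t, and f takes values in [0,1], then (1/T)Σ_t g(b_t, y_t) ≤ γ + R + 1. -/

import Mathlib

/-- Constraint-violation bound: if the combined regret bound holds and there is an
artificial expert satisfying the constraint at every round, then the average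
constraint loss of the predictions is at most γ + R + 1. -/
theorem stmt_1 (T L : ℕ) (hT : 1 ≤ T)
    (f g : ℝ → ℝ → ℝ) (γ R lamMax : ℝ)
    (hlamMax : 1 ≤ lamMax) (hR : 0 ≤ R)
    (hf01 : ∀ b y : ℝ, f b y ∈ Set.Icc (0 : ℝ) 1)
    (b lam y : ℕ → ℝ) (x : ℕ → ℝ)
    (S : ℕ → ℝ → (Fin (L + 1) → ℝ))
    (hlam : ∀ t, lam t ∈ Set.Icc (0 : ℝ) lamMax)
    (l : ℝ → ℝ → ℝ → ℝ)
    (hl : ∀ b' μ y', l b' μ y' = f b' y' + μ * (g b' y' - γ))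
    (hregret : ∀ p ∈ stdSimplex ℝ (Fin (L + 1)), ∀ μ ∈ Set.Icc (0 : ℝ) lamMax,
      (1 / T : ℝ) * ∑ t ∈ Finset.range T, l (b t) μ (y t)
        - (1 / T : ℝ) * ∑ t ∈ Finset.range T, l (∑ k, p k * S t (x t) k) (lam t) (y t)
        ≤ R)
    (k : Fin (L + 1))
    (hexpert : ∀ t, g (S t (x t) k) (y t) ≤ γ) :
    (1 / T : ℝ) * ∑ t ∈ Finset.range T, g (b t) (y t) ≤ γ + R + 1 := by
  have hT0 : (0:ℝ) < T := by exact_mod_cast hT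
  set p : Fin (L + 1) → ℝ := fun j => if j = k then 1 else 0 with hp
  have hpmem : p ∈ stdSimplex ℝ (Fin (L + 1)) := by
    constructor
    · intro i; simp [hp]; split <;> norm_num
    · simp [hp]
  have hpsum : ∀ t, (∑ j, p j * S t (x t) j) = S t (x t) k := by
    intro t
    rw [Finset.sum_eq_single k]
    · simp [hp]
    · intro j _ hj; simp [hp, hj]
    · simp
  have hmu : (1:ℝ) ∈ Set.Icc (0:ℝ) lamMax := ⟨zero_le_one, hlamMax⟩
  have hreg := hregret p hpmem 1 hmu
  -- bound expert losses by 1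
  have hexp1 : ∀ t, l (∑ j, p j * S t (x t) j) (lam t) (y t) ≤ 1 := by
    intro t
    rw [hpsum t, hl]
    have h1 := (hf01 (S t (x t) k) (y t)).2
    have h2 : lam t * (g (S t (x t) k) (y t) - γ) ≤ 0 :=
      mul_nonpos_of_nonneg_of_nonpos (hlam t).1 (by linarith [hexpert t])
    linarith
  have hbl : ∀ t, g (b t) (y t) - γ ≤ l (b t) 1 (y t) := by
    intro t
    rw [hl]
    have := (hf01 (b t) (y t)).1
    linarith
  have hsum1 : ∑ t ∈ Finset.range T, (g (b t) (y t) - γ) ≤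
      ∑ t ∈ Finset.range T, l (b t) 1 (y t) :=
    Finset.sum_le_sum fun t _ => hbl t
  have hsum2 : ∑ t ∈ Finset.range T, l (∑ j, p j * S t (x t) j) (lam t) (y t) ≤ T := by
    calc _ ≤ ∑ t ∈ Finset.range T, (1:ℝ) := Finset.sum_le_sum fun t _ => hexp1 t
    _ = T := by simp
  have key : (1 / T : ℝ) * ∑ t ∈ Finset.range T, (g (b t) (y t) - γ) ≤ R + 1 := by
    have h1 : (1 / T : ℝ) * ∑ t ∈ Finset.range T, (g (b t) (y t) - γ)
        ≤ (1 / T : ℝ) * ∑ t ∈ Finset.range T, l (b t) 1 (y t) := by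
      apply mul_le_mul_of_nonneg_left hsum1 (by positivity)
    have h2 : (1 / T : ℝ) * ∑ t ∈ Finset.range T, l (∑ j, p j * S t (x t) j) (lam t) (y t)
        ≤ 1 := by
      rw [div_mul_eq_mul_div, one_mul, div_le_one hT0]
      exact hsum2
    linarith
  have hsplit : (1 / T : ℝ) * ∑ t ∈ Finset.range T, (g (b t) (y t) - γ)
      = (1 / T : ℝ) * ∑ t ∈ Finset.range T, g (b t) (y t) - γ := by
    rw [Finset.sum_sub_distrib]
    field_simp
    rw [Finset.sum_const, Finset.card_range, nsmul_eq_mul]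
  linarith [key, hsplit.symm, hsplit]
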